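/- The two-state Floyd automaton with states {q₀, q₁}, initial and final state q₀, push transitions q₀ →^{a} q₁, q₀ →^{b} q₁, q₁ →^{c} q₁ for all c ∈ {a, ā, b, b̄}, and flush transitions q₁ ⇒^{q₁} q₁, q₁ ⇒^{q₀} q₀, under the precedence matrix with a ≐ ā, b ≐ b̄, opening symbols a,b yielding precedence (⋖) to a and b, closing symbols ā, b̄ taking precedence (⋗) over ā, b̄, #, and yielding to a, b, and # ⋖ a, # ⋖ b, accepts exactly the Dyck language over the two parenthesis pairs (a, ā) and (b, b̄). -/

import Mathlib

/-! # Preliminaries: precedence relations, Floyd automata, chains, supports,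
operator (Floyd) grammars. -/

/-- The three operator precedence relations. -/
inductive PrecRel : Type
  | lt  -- ⋖ , yields precedence
  | eq  -- ≐ , equal in precedence
  | gt  -- ⋗ , takes precedence
deriving DecidableEq

/-- A (nondeterministic) Floyd automaton over a precedence alphabet `(T, M)`.
`none` plays the role of the delimiter `#`. -/
structure FloydAutomaton (T : Type*) (Q : Type*) where
  /-- conflict-free operator precedence matrix over `T ∪ {#}` -/
  M : Option T → Option T → Option PrecRel
  /-- initial states -/
  init : Set Q
  /-- final states -/
  final : Set Q
  /-- push transition function -/
  push : Q → T → Set Q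
  /-- flush transition function -/
  flush : Q → Q → Set Q

namespace FloydAutomaton

/-- A configuration: the bottom stack symbol `(#, base)` is represented by `base`,
the rest of the stack is a list (top = head) of triples (marked?, symbol, state),
and `input` is the remaining input (the trailing `#` is implicit). -/
structure Config (T : Type*) (Q : Type*) where
  base : Q
  stack : List (Bool × T × Q)
  input : List T

variable {T Q : Type*}

/-- Symbol on top of the stack (`none` = `#`). -/
def Config.topSym (c : Config T Q) : Option T := c.stack.head?.map (fun s => s.2.1)

/-- State on top of the stack. -/
def Config.topState (c : Config T Q) : Q := ((c.stack.head?.map (fun s => s.2.2)).getD c.base)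

/-- Number of marked symbols on the stack. -/
def Config.marked (c : Config T Q) : ℕ := c.stack.countP (fun s => s.1)

variable (A : FloydAutomaton T Q)

/-- One move of a Floyd automaton: push (top ≐ current), mark (top ⋖ current),
flush (top ⋗ current). -/
inductive Step : Config T Q → Config T Q → Prop
  | push {b : Q} {st : List (Bool × T × Q)} {w : List T} {q : Q} (a : T) :
      A.M (Config.topSym ⟨b, st, a :: w⟩) (some a) = some PrecRel.eq →
      q ∈ A.push (Config.topState ⟨b, st, a :: w⟩) a →
      Step ⟨b, st, a :: w⟩ ⟨b, (false, a, q) :: st, w⟩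
  | mark {b : Q} {st : List (Bool × T × Q)} {w : List T} {q : Q} (a : T) :
      A.M (Config.topSym ⟨b, st, a :: w⟩) (some a) = some PrecRel.lt →
      q ∈ A.push (Config.topState ⟨b, st, a :: w⟩) a →
      Step ⟨b, st, a :: w⟩ ⟨b, (true, a, q) :: st, w⟩
  | flushMid {b : Q} {pre : List (Bool × T × Q)} {x : T} {qm : Q}
      {s : Bool × T × Q} {rest : List (Bool × T × Q)} {w : List T} {q : Q} :
      (∀ p ∈ pre, p.1 = false) →
      A.M (Config.topSym ⟨b, pre ++ (true, x, qm) :: s :: rest, w⟩) w.head? = some PrecRel.gt →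
      q ∈ A.flush (Config.topState ⟨b, pre ++ (true, x, qm) :: s :: rest, w⟩) s.2.2 →
      Step ⟨b, pre ++ (true, x, qm) :: s :: rest, w⟩ ⟨b, (s.1, s.2.1, q) :: rest, w⟩
  | flushBot {b : Q} {pre : List (Bool × T × Q)} {x : T} {qm : Q} {w : List T} {q : Q} :
      (∀ p ∈ pre, p.1 = false) →
      A.M (Config.topSym ⟨b, pre ++ [(true, x, qm)], w⟩) w.head? = some PrecRel.gt →
      q ∈ A.flush (Config.topState ⟨b, pre ++ [(true, x, qm)], w⟩) b →
      Step ⟨b, pre ++ [(true, x, qm)], w⟩ ⟨q, [], w⟩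

/-- Acceptance of a finite word. -/
def Accepts (x : List T) : Prop :=
  ∃ qI ∈ A.init, ∃ qF ∈ A.final,
    Relation.ReflTransGen A.Step ⟨qI, [], x⟩ ⟨qF, [], []⟩

/-- The language recognized by a Floyd automaton. -/
def language : Set (List T) := { x | A.Accepts x }

/-- A Floyd automaton is deterministic iff it has one initial state and all
transition functions yield at most one state. -/
def Deterministic : Prop :=
  (∃ q, A.init = {q}) ∧ (∀ q a, (A.push q a).Subsingleton) ∧
    (∀ q p, (A.flush q p).Subsingleton)

/-- States of the powerset determinization: a lookback symbol together with a set
of pairs of states (`none` in the second component is `⊥`). -/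
abbrev DetState (T : Type*) (Q : Type*) := Option T × Set (Q × Option Q)

/-- Push transition of the determinization. -/
def detPushF (s : DetState T Q) (a : T) : DetState T Q :=
  (some a, { ht | ∃ q p, (q, p) ∈ s.2 ∧ ht.1 ∈ A.push q a ∧
      ((A.M s.1 (some a) = some PrecRel.lt ∧ ht.2 = some q) ∨
       (A.M s.1 (some a) = some PrecRel.eq ∧ ht.2 = p)) })

/-- Flush transition of the determinization. -/
def detFlushF (s₁ s₂ : DetState T Q) : DetState T Q :=
  (s₂.1, { hp | ∃ r q, (r, some q) ∈ s₁.2 ∧ (q, hp.2) ∈ s₂.2 ∧ hp.1 ∈ A.flush r q })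

/-- The powerset determinization of a Floyd automaton. -/
def det : FloydAutomaton T (DetState T Q) where
  M := A.M
  init := {(none, { p | p.2 = none ∧ p.1 ∈ A.init })}
  final := { s | s.1 = none ∧ ∃ q ∈ A.final, (q, none) ∈ s.2 }
  push := fun s a => {A.detPushF s a}
  flush := fun s₁ s₂ => {A.detFlushF s₁ s₂}

end FloydAutomaton

section Chains

variable {T : Type*}

mutual
/-- `ChainB M a₀ y b` : the word `y` is the body of a (simple or composed) chain
`⌈a₀⌉ y ⌊b⌋` over the precedence alphabet `(T, M)`. -/
inductive ChainB (M : Option T → Option T → Option PrecRel) :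
    Option T → List T → Option T → Prop
  | head0 {a₀ b : Option T} {a₁ : T} {y : List T} :
      M a₀ b ≠ none →
      M a₀ (some a₁) = some PrecRel.lt →
      ChainT M a₁ y b →
      ChainB M a₀ (a₁ :: y) b
  | head {a₀ b : Option T} {a₁ : T} {x₀ y : List T} :
      M a₀ b ≠ none →
      M a₀ (some a₁) = some PrecRel.lt →
      ChainB M a₀ x₀ (some a₁) →
      ChainT M a₁ y b →
      ChainB M a₀ (x₀ ++ a₁ :: y) b

/-- Auxiliary: tail of a chain body, after a skeleton symbol `a`. -/
inductive ChainT (M : Option T → Option T → Option PrecRel) :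
    T → List T → Option T → Prop
  | last0 {a : T} {b : Option T} :
      M (some a) b = some PrecRel.gt →
      ChainT M a [] b
  | last {a : T} {xn : List T} {b : Option T} :
      ChainB M (some a) xn b →
      M (some a) b = some PrecRel.gt →
      ChainT M a xn b
  | cons0 {a a' : T} {y : List T} {b : Option T} :
      M (some a) (some a') = some PrecRel.eq →
      ChainT M a' y b →
      ChainT M a (a' :: y) b
  | cons {a a' : T} {x y : List T} {b : Option T} :
      M (some a) (some a') = some PrecRel.eq →
      ChainB M (some a) x (some a') →
      ChainT M a' y b →
      ChainT M a (x ++ a' :: y) b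
end

/-- `SimpleBody M a₀ l b` : `l` is the body `a₁ … aₙ` of a simple chain
`⌈a₀⌉ a₁ … aₙ ⌊b⌋`, i.e. `a₀ ⋖ a₁ ≐ … ≐ aₙ ⋗ b` with `M a₀ b` defined. -/
def SimpleBody (M : Option T → Option T → Option PrecRel)
    (a₀ : Option T) (l : List T) (b : Option T) : Prop :=
  (l ≠ []) ∧ M a₀ b ≠ none ∧
  (∀ h : l ≠ [], M a₀ (some (l.head h)) = some PrecRel.lt ∧
      M (some (l.getLast h)) b = some PrecRel.gt) ∧
  List.Chain' (fun x y => M (some x) (some y) = some PrecRel.eq) l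

/-- `≐`-acyclicity of a precedence matrix. -/
def EqAcyclic (M : Option T → Option T → Option PrecRel) : Prop :=
  ∀ x : Option T, ¬ Relation.TransGen (fun u v => M u v = some PrecRel.eq) x x

variable {Q : Type*}

mutual
/-- `Supp A q y q'` : the automaton `A` has a support labelled by the chain body `y`
leading from state `q` to state `q'`, ending with a flush labelled by the state
reached after the first filler. -/
inductive Supp (A : FloydAutomaton T Q) : Q → List T → Q → Prop
  | head0 {q₀ q₁ qf : Q} {a₁ : T} {y : List T} :
      q₁ ∈ A.push q₀ a₁ →
      SuppT A q₀ q₁ y qf →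
      Supp A q₀ (a₁ :: y) qf
  | head {q₀ q₀' q₁ qf : Q} {a₁ : T} {x₀ y : List T} :
      Supp A q₀ x₀ q₀' →
      q₁ ∈ A.push q₀' a₁ →
      SuppT A q₀' q₁ y qf →
      Supp A q₀ (x₀ ++ a₁ :: y) qf

/-- Auxiliary: the tail of a support; the first argument after `A` is the label
of the final flush. -/
inductive SuppT (A : FloydAutomaton T Q) : Q → Q → List T → Q → Prop
  | last0 {q₀' qn qf : Q} :
      qf ∈ A.flush qn q₀' →
      SuppT A q₀' qn [] qf
  | last {q₀' qn q' qf : Q} {xn : List T} :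
      Supp A qn xn q' →
      qf ∈ A.flush q' q₀' →
      SuppT A q₀' qn xn qf
  | cons0 {q₀' qi q'' qf : Q} {a : T} {y : List T} :
      q'' ∈ A.push qi a →
      SuppT A q₀' q'' y qf →
      SuppT A q₀' qi (a :: y) qf
  | cons {q₀' qi q' q'' qf : Q} {a : T} {x y : List T} :
      Supp A qi x q' →
      q'' ∈ A.push q' a →
      SuppT A q₀' q'' y qf →
      SuppT A q₀' qi (x ++ a :: y) qf
end

end Chains

section Grammar

variable {T : Type*}

open Symbol in
/-- A symbol is a nonterminal. -/
def IsNT {N : Type*} : Symbol T N → Prop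
  | Symbol.nonterminal _ => True
  | Symbol.terminal _ => False

/-- A string over `Σ ∪ N` has no two adjacent nonterminals. -/
def NoAdjNT {N : Type*} (l : List (Symbol T N)) : Prop :=
  List.Chain' (fun x y => ¬(IsNT x ∧ IsNT y)) l

/-- An operator grammar: no right-hand side contains two adjacent nonterminals. -/
def OperatorGrammar (g : ContextFreeGrammar T) : Prop :=
  ∀ r ∈ g.rules, NoAdjNT r.output

/-- The equal-in-precedence relation `a ≐ b` of a grammar. -/
def GEq (g : ContextFreeGrammar T) (a b : T) : Prop :=
  ∃ r ∈ g.rules, ∃ α mid β,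
    r.output = α ++ Symbol.terminal a :: (mid ++ Symbol.terminal b :: β) ∧
    (mid = [] ∨ ∃ B, mid = [Symbol.nonterminal B])

/-- The left terminal set: `a ∈ 𝓛(A)` iff `A ⇒* B a α` with `B ∈ N ∪ {ε}`. -/
def LTerm (g : ContextFreeGrammar T) (A : g.NT) (a : T) : Prop :=
  ∃ pre α, g.Derives [Symbol.nonterminal A] (pre ++ Symbol.terminal a :: α) ∧
    (pre = [] ∨ ∃ B, pre = [Symbol.nonterminal B])

/-- The right terminal set: `a ∈ 𝓡(A)` iff `A ⇒* α a B` with `B ∈ N ∪ {ε}`. -/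
def RTerm (g : ContextFreeGrammar T) (A : g.NT) (a : T) : Prop :=
  ∃ α post, g.Derives [Symbol.nonterminal A] (α ++ Symbol.terminal a :: post) ∧
    (post = [] ∨ ∃ B, post = [Symbol.nonterminal B])

/-- The yields-precedence relation `a ⋖ b` of a grammar. -/
def GLt (g : ContextFreeGrammar T) (a b : T) : Prop :=
  ∃ r ∈ g.rules, ∃ α β D,
    r.output = α ++ Symbol.terminal a :: Symbol.nonterminal D :: β ∧ LTerm g D b

/-- The takes-precedence relation `a ⋗ b` of a grammar. -/
def GGt (g : ContextFreeGrammar T) (a b : T) : Prop :=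
  ∃ r ∈ g.rules, ∃ α β D,
    r.output = α ++ Symbol.nonterminal D :: Symbol.terminal b :: β ∧ RTerm g D a

/-- Conflict-freeness: for each pair of terminals at most one precedence relation holds. -/
def ConflictFree (g : ContextFreeGrammar T) : Prop :=
  ∀ a b : T, ¬(GEq g a b ∧ GLt g a b) ∧ ¬(GEq g a b ∧ GGt g a b) ∧
    ¬(GLt g a b ∧ GGt g a b)

/-- A Floyd (operator precedence) grammar. -/
def FloydGrammar (g : ContextFreeGrammar T) : Prop :=
  OperatorGrammar g ∧ ConflictFree g

end Grammar


/-- The four parenthesis symbols. -/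
inductive Dk : Type | a | abar | b | bbar
deriving DecidableEq

/-- The precedence matrix of Figure 2: `a ≐ ā`, `b ≐ b̄`, opening symbols yield
to `a, b`, closing symbols take precedence over `ā, b̄, #` and yield to `a, b`,
and `# ⋖ a`, `# ⋖ b`. -/
def Mdyck : Option Dk → Option Dk → Option PrecRel
  | some Dk.a, some Dk.a => some PrecRel.lt
  | some Dk.a, some Dk.b => some PrecRel.lt
  | some Dk.a, some Dk.abar => some PrecRel.eq
  | some Dk.b, some Dk.a => some PrecRel.lt
  | some Dk.b, some Dk.b => some PrecRel.lt
  | some Dk.b, some Dk.bbar => some PrecRel.eq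
  | some Dk.abar, some Dk.a => some PrecRel.lt
  | some Dk.abar, some Dk.b => some PrecRel.lt
  | some Dk.abar, some Dk.abar => some PrecRel.gt
  | some Dk.abar, some Dk.bbar => some PrecRel.gt
  | some Dk.abar, none => some PrecRel.gt
  | some Dk.bbar, some Dk.a => some PrecRel.lt
  | some Dk.bbar, some Dk.b => some PrecRel.lt
  | some Dk.bbar, some Dk.abar => some PrecRel.gt
  | some Dk.bbar, some Dk.bbar => some PrecRel.gt
  | some Dk.bbar, none => some PrecRel.gt
  | none, some Dk.a => some PrecRel.lt
  | none, some Dk.b => some PrecRel.lt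
  | _, _ => none

/-- The two-state automaton of Figure 2 (`false` = `q₀`, `true` = `q₁`). -/
def dyckFA : FloydAutomaton Dk Bool where
  M := Mdyck
  init := {false}
  final := {false}
  push := fun q s =>
    match q, s with
    | false, Dk.a => {true}
    | false, Dk.b => {true}
    | true, _ => {true}
    | _, _ => ∅
  flush := fun q p =>
    match q, p with
    | true, true => {true}
    | true, false => {false}
    | _, _ => ∅

/-- The Dyck language over the pairs `(a, ā)` and `(b, b̄)`:
`S → ε | a S ā S | b S b̄ S`. -/
inductive IsDyck : List Dk → Prop
  | nil : IsDyck []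
  | wrapA {x y : List Dk} : IsDyck x → IsDyck y →
      IsDyck (Dk.a :: x ++ Dk.abar :: y)
  | wrapB {x y : List Dk} : IsDyck x → IsDyck y →
      IsDyck (Dk.b :: x ++ Dk.bbar :: y)

namespace DyckProof

/-- The matching closing symbol of an opening symbol. -/
def close : Dk → Dk
  | Dk.a => Dk.abar
  | Dk.b => Dk.bbar
  | x => x

abbrev E := Bool × Dk × Bool

/-- Invariant on reachable stacks. -/
inductive Good : List E → Prop
  | nil : Good []
  | op {o : Dk} {st : List E} : (o = Dk.a ∨ o = Dk.b) → Good st →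
      Good ((true, o, true) :: st)
  | cl {o : Dk} {st : List E} : (o = Dk.a ∨ o = Dk.b) → Good st →
      Good ((false, close o, true) :: (true, o, true) :: st)

/-- `Comp st w` : the input `w` completes the stack `st` into a Dyck word. -/
def Comp : List E → List Dk → Prop
  | [], w => IsDyck w
  | (true, o, _) :: st, w => ∃ u v, w = u ++ close o :: v ∧ IsDyck u ∧ Comp st v
  | (false, _, _) :: [], _ => True
  | (false, _, _) :: _ :: st, w => Comp st w

theorem dyck_append {u v : List Dk} (hu : IsDyck u) (hv : IsDyck v) :
    IsDyck (u ++ v) := by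
  induction hu with
  | nil => exact hv
  | wrapA hx hy ihx ihy =>
      have := IsDyck.wrapA hx ihy
      simpa using this
  | wrapB hx hy ihx ihy =>
      have := IsDyck.wrapB hx ihy
      simpa using this

theorem good_states {st : List E} (h : Good st) : ∀ p ∈ st, p.2.2 = true := by
  induction h with
  | nil => simp
  | op ho hst ih => simp_all
  | cl ho hst ih => simp_all

theorem comp_prepend {d : List Dk} (hd : IsDyck d) :
    ∀ st w, Comp st w → Comp st (d ++ w)
  | [], w, h => dyck_append hd h
  | (true, o, q) :: st, w, ⟨u, v, hw, hu, hc⟩ =>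
      ⟨d ++ u, v, by simp [hw], dyck_append hd hu, hc⟩
  | [(false, o, q)], _, _ => trivial
  | (false, o, q) :: e :: st, w, h => comp_prepend hd st w h

theorem isDyck_wrap {o : Dk} (ho : o = Dk.a ∨ o = Dk.b) {u : List Dk}
    (hu : IsDyck u) : IsDyck (o :: u ++ [close o]) := by
  rcases ho with rfl | rfl
  · simpa [close] using IsDyck.wrapA hu IsDyck.nil
  · simpa [close] using IsDyck.wrapB hu IsDyck.nil

theorem comp_wrap {o : Dk} (ho : o = Dk.a ∨ o = Dk.b) {u v : List Dk}
    (hu : IsDyck u) {st : List E} (h : Comp st v) :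
    Comp st (o :: u ++ close o :: v) := by
  have : o :: u ++ close o :: v = (o :: u ++ [close o]) ++ v := by simp
  rw [this]
  exact comp_prepend (isDyck_wrap ho hu) st v h

/- Precedence facts -/
theorem M_lt_open (t : Option Dk) {o : Dk} (ho : o = Dk.a ∨ o = Dk.b) :
    Mdyck t (some o) = some PrecRel.lt := by
  rcases ho with rfl | rfl <;> rcases t with _ | d <;> first | rfl | (cases d <;> rfl)

theorem M_no_lt_close (t : Option Dk) {o : Dk} (ho : o = Dk.a ∨ o = Dk.b) :
    Mdyck t (some (close o)) ≠ some PrecRel.lt := by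
  rcases ho with rfl | rfl <;> rcases t with _ | d <;>
    first | decide | (cases d <;> decide)

theorem M_open_no_gt {o : Dk} (ho : o = Dk.a ∨ o = Dk.b) (t : Option Dk) :
    Mdyck (some o) t ≠ some PrecRel.gt := by
  rcases ho with rfl | rfl <;> rcases t with _ | d <;>
    first | decide | (cases d <;> decide)

theorem M_close_gt {o : Dk} (ho : o = Dk.a ∨ o = Dk.b) (t : Option Dk)
    (ht : t = none ∨ t = some Dk.abar ∨ t = some Dk.bbar) :
    Mdyck (some (close o)) t = some PrecRel.gt := by
  rcases ho with rfl | rfl <;> rcases ht with rfl | rfl | rfl <;> rfl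

theorem M_eq_close {o : Dk} (ho : o = Dk.a ∨ o = Dk.b) {c : Dk}
    (h : Mdyck (some o) (some c) = some PrecRel.eq) : c = close o := by
  rcases ho with rfl | rfl <;> cases c <;> first | rfl | (exfalso; exact absurd h (by decide))

theorem M_close_no_eq {o : Dk} (ho : o = Dk.a ∨ o = Dk.b) (t : Option Dk) :
    Mdyck (some (close o)) t ≠ some PrecRel.eq := by
  rcases ho with rfl | rfl <;> rcases t with _ | d <;>
    first | decide | (cases d <;> decide)

theorem M_lt_is_open (t : Option Dk) {c : Dk}
    (h : Mdyck t (some c) = some PrecRel.lt) : c = Dk.a ∨ c = Dk.b := by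
  cases c
  · exact Or.inl rfl
  · exact absurd h (M_no_lt_close t (Or.inl rfl))
  · exact Or.inr rfl
  · exact absurd h (M_no_lt_close t (Or.inr rfl))

/- push facts -/
theorem push_true {q : Bool} {a : Dk} (ha : a = Dk.a ∨ a = Dk.b) :
    ∀ {p : Bool}, p ∈ dyckFA.push q a → p = true := by
  rcases ha with rfl | rfl <;> cases q <;> intro p hp <;> simpa [dyckFA] using hp

theorem push_true_any {q : Bool} {a : Dk} (hq : q = true) :
    ∀ {p : Bool}, p ∈ dyckFA.push q a → p = true := by
  subst hq; intro p hp; simpa [dyckFA] using hp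

theorem mem_push_open {q : Bool} {a : Dk} (ha : a = Dk.a ∨ a = Dk.b) :
    true ∈ dyckFA.push q a := by
  rcases ha with rfl | rfl <;> cases q <;> simp [dyckFA]

theorem flush_tt {p : Bool} (hp : p ∈ dyckFA.flush true true) : p = true := by
  simpa [dyckFA] using hp

theorem flush_tf {p : Bool} (hp : p ∈ dyckFA.flush true false) : p = false := by
  simpa [dyckFA] using hp


theorem mem_push_anytrue (a : Dk) : true ∈ dyckFA.push true a := by
  cases a <;> simp [dyckFA]

theorem M_eq'_close {o : Dk} (ho : o = Dk.a ∨ o = Dk.b) :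
    Mdyck (some o) (some (close o)) = some PrecRel.eq := by
  rcases ho with rfl | rfl <;> rfl

open FloydAutomaton Relation in
/-- Forward run lemma. -/
theorem fwd_step {o : Dk} (ho : o = Dk.a ∨ o = Dk.b) {x y : List Dk}
    (ihx : ∀ st w, (∀ p ∈ st, p.2.2 = true) →
      ((w : List Dk).head? = none ∨ w.head? = some Dk.abar ∨ w.head? = some Dk.bbar) →
      Relation.ReflTransGen dyckFA.Step ⟨false, st, x ++ w⟩ ⟨false, st, w⟩)
    (ihy : ∀ st w, (∀ p ∈ st, p.2.2 = true) →
      ((w : List Dk).head? = none ∨ w.head? = some Dk.abar ∨ w.head? = some Dk.bbar) →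
      Relation.ReflTransGen dyckFA.Step ⟨false, st, y ++ w⟩ ⟨false, st, w⟩) :
    ∀ st w, (∀ p ∈ st, p.2.2 = true) →
      ((w : List Dk).head? = none ∨ w.head? = some Dk.abar ∨ w.head? = some Dk.bbar) →
      Relation.ReflTransGen dyckFA.Step
        ⟨false, st, (o :: x ++ close o :: y) ++ w⟩ ⟨false, st, w⟩ := by
  intro st w hst hw
  have e1 : (o :: x ++ close o :: y) ++ w = o :: (x ++ (close o :: (y ++ w))) := by simp
  rw [e1]
  have s1 : dyckFA.Step ⟨false, st, o :: (x ++ (close o :: (y ++ w)))⟩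
      ⟨false, (true, o, true) :: st, x ++ (close o :: (y ++ w))⟩ :=
    Step.mark o (M_lt_open _ ho) (mem_push_open ho)
  refine ReflTransGen.head s1 ?_
  have hst1 : ∀ p ∈ (true, o, true) :: st, p.2.2 = true := by
    intro p hp
    rcases List.mem_cons.mp hp with rfl | hp
    · rfl
    · exact hst p hp
  have r2 := ihx ((true, o, true) :: st) (close o :: (y ++ w)) hst1
    (by rcases ho with rfl | rfl <;> simp [close])
  refine r2.trans ?_
  have s3 : dyckFA.Step ⟨false, (true, o, true) :: st, close o :: (y ++ w)⟩
      ⟨false, (false, close o, true) :: (true, o, true) :: st, y ++ w⟩ :=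
    Step.push (close o) (M_eq'_close ho) (mem_push_anytrue _)
  refine ReflTransGen.head s3 ?_
  have hst2 : ∀ p ∈ (false, close o, true) :: (true, o, true) :: st, p.2.2 = true := by
    intro p hp
    rcases List.mem_cons.mp hp with rfl | hp
    · rfl
    · exact hst1 p hp
  have r4 := ihy ((false, close o, true) :: (true, o, true) :: st) w hst2 hw
  refine r4.trans ?_
  cases st with
  | nil =>
      refine ReflTransGen.single ?_
      exact Step.flushBot (pre := [(false, close o, true)]) (by simp)
        (M_close_gt ho _ hw) (by simp [dyckFA, FloydAutomaton.Config.topState])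
  | cons s rest =>
      obtain ⟨sm, ssym, sq⟩ := s
      have hsq : sq = true := hst _ List.mem_cons_self
      subst hsq
      refine ReflTransGen.single ?_
      exact Step.flushMid (pre := [(false, close o, true)]) (s := (sm, ssym, true))
        (by simp) (M_close_gt ho _ hw) (by simp [dyckFA, FloydAutomaton.Config.topState])

open FloydAutomaton Relation in
theorem fwd {x : List Dk} (hx : IsDyck x) :
    ∀ st w, (∀ p ∈ st, p.2.2 = true) →
      ((w : List Dk).head? = none ∨ w.head? = some Dk.abar ∨ w.head? = some Dk.bbar) →
      Relation.ReflTransGen dyckFA.Step ⟨false, st, x ++ w⟩ ⟨false, st, w⟩ := by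
  induction hx with
  | nil => intro st w _ _; exact .refl
  | wrapA hx hy ihx ihy => exact fwd_step (Or.inl rfl) ihx ihy
  | wrapB hx hy ihx ihy => exact fwd_step (Or.inr rfl) ihx ihy


theorem good_inv {l : List E} (hg : Good l) :
    l = [] ∨
    (∃ o st, (o = Dk.a ∨ o = Dk.b) ∧ l = (true, o, true) :: st ∧ Good st) ∨
    (∃ o st, (o = Dk.a ∨ o = Dk.b) ∧
      l = (false, close o, true) :: (true, o, true) :: st ∧ Good st) := by
  cases hg with
  | nil => exact Or.inl rfl
  | op ho hst => exact Or.inr (Or.inl ⟨_, _, ho, rfl, hst⟩)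
  | cl ho hst => exact Or.inr (Or.inr ⟨_, _, ho, rfl, hst⟩)

open FloydAutomaton in
theorem bwd : ∀ {c : Config Dk Bool},
    Relation.ReflTransGen dyckFA.Step c ⟨false, [], []⟩ →
    Good c.stack → c.base = false → Comp c.stack c.input := by
  intro c h
  induction h using Relation.ReflTransGen.head_induction_on with
  | refl => intro _ _; exact IsDyck.nil
  | head hstep _h ih =>
    intro hg hb
    cases hstep with
    | @push b st w q a hM hq =>
        subst hb
        rcases good_inv hg with rfl | ⟨o, st2, ho, rfl, hst2⟩ | ⟨o, st2, ho, heq, hst2⟩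
        · exact absurd (show Mdyck none (some a) = some PrecRel.eq from hM)
            (by cases a <;> decide)
        · have ha : a = close o :=
            M_eq_close ho (show Mdyck (some o) (some a) = some PrecRel.eq from hM)
          subst ha
          have hqt : q = true := push_true_any rfl hq
          subst hqt
          have hcomp := ih (Good.cl ho hst2) rfl
          exact ⟨[], w, rfl, IsDyck.nil, hcomp⟩
        · subst heq
          exact absurd (show Mdyck (some (close o)) (some a) = some PrecRel.eq from hM)
            (M_close_no_eq ho _)
    | @mark b st w q a hM hq =>
        subst hb
        have ha : a = Dk.a ∨ a = Dk.b :=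
          M_lt_is_open _ (show Mdyck (Config.topSym ⟨false, st, a :: w⟩) (some a)
            = some PrecRel.lt from hM)
        have hqt : q = true := push_true ha hq
        subst hqt
        obtain ⟨u, v, hwv, hu, hc⟩ := ih (Good.op ha hg) rfl
        have hwv' : w = u ++ close a :: v := hwv
        show Comp st (a :: w)
        rw [hwv']
        exact comp_wrap ha hu hc
    | @flushMid b pre x qm s rest w q hpre hM hq =>
        subst hb
        rcases good_inv hg with habs | ⟨o, st2, ho, heq, hst2⟩ | ⟨o, st2, ho, heq, hst2⟩
        · exact absurd habs (by simp)
        · -- top of stack marked, so pre = [] and top symbol is an opener: no ⋗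
          cases pre with
          | nil =>
              simp only [List.nil_append, List.cons.injEq, Prod.mk.injEq] at heq
              obtain ⟨⟨-, hxo, -⟩, -⟩ := heq
              subst hxo
              exact absurd (show Mdyck (some x) w.head? = some PrecRel.gt from hM)
                (M_open_no_gt ho _)
          | cons e pre' =>
              simp only [List.cons_append, List.cons.injEq] at heq
              have := hpre e List.mem_cons_self
              rw [heq.1] at this
              exact absurd this (by simp)
        · cases pre with
          | nil =>
              simp only [List.nil_append, List.cons.injEq, Prod.mk.injEq] at heq
              exact absurd heq.1.1 (by simp)
          | cons e pre' =>
              simp only [List.cons_append, List.cons.injEq] at heq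
              obtain ⟨rfl, heq2⟩ := heq
              cases pre' with
              | cons e' pre'' =>
                  simp only [List.cons_append, List.cons.injEq] at heq2
                  have := hpre e' (by simp)
                  rw [heq2.1] at this
                  exact absurd this (by simp)
              | nil =>
                  simp only [List.nil_append, List.cons.injEq, Prod.mk.injEq] at heq2
                  obtain ⟨⟨-, hxo, hqm⟩, hrest⟩ := heq2
                  subst hxo hqm
                  obtain ⟨sm, ssym, sq⟩ := s
                  have hsq : sq = true := by
                    have := good_states hst2 (sm, ssym, sq) (by rw [← hrest]; simp)
                    simpa using this
                  subst hsq
                  have hqt : q = true := flush_tt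
                    (show q ∈ dyckFA.flush true true from hq)
                  subst hqt
                  have hcomp := ih (show Good ((sm, ssym, true) :: rest) from
                    hrest ▸ hst2) rfl
                  exact show Comp ((sm, ssym, true) :: rest) w from hcomp
    | @flushBot b pre x qm w q hpre hM hq =>
        subst hb
        rcases good_inv hg with habs | ⟨o, st2, ho, heq, hst2⟩ | ⟨o, st2, ho, heq, hst2⟩
        · exact absurd habs (by simp)
        · cases pre with
          | nil =>
              simp only [List.nil_append, List.cons.injEq, Prod.mk.injEq] at heq
              obtain ⟨⟨-, hxo, -⟩, -⟩ := heq
              subst hxo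
              exact absurd (show Mdyck (some x) w.head? = some PrecRel.gt from hM)
                (M_open_no_gt ho _)
          | cons e pre' =>
              simp only [List.cons_append, List.cons.injEq] at heq
              have := hpre e List.mem_cons_self
              rw [heq.1] at this
              exact absurd this (by simp)
        · cases pre with
          | nil =>
              simp only [List.nil_append, List.cons.injEq, Prod.mk.injEq] at heq
              exact absurd heq.1.1 (by simp)
          | cons e pre' =>
              simp only [List.cons_append, List.cons.injEq] at heq
              obtain ⟨rfl, heq2⟩ := heq
              cases pre' with
              | cons e' pre'' =>
                  simp only [List.cons_append, List.cons.injEq] at heq2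
                  have := hpre e' (by simp)
                  rw [heq2.1] at this
                  exact absurd this (by simp)
              | nil =>
                  simp only [List.nil_append, List.cons.injEq, Prod.mk.injEq] at heq2
                  have hqf : q = false := flush_tf
                    (show q ∈ dyckFA.flush true false from hq)
                  subst hqf
                  exact show IsDyck w from ih Good.nil rfl

end DyckProof


/-- the automaton accepts exactly the Dyck language. -/
theorem dyckFA_language : dyckFA.language = { x | IsDyck x } := by
  ext x
  constructor
  · rintro ⟨qI, hqI, qF, hqF, run⟩
    have h1 : qI = false := hqI
    have h2 : qF = false := hqF
    subst h1 h2
    exact DyckProof.bwd run DyckProof.Good.nil rfl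
  · intro hx
    refine ⟨false, rfl, false, rfl, ?_⟩
    have := DyckProof.fwd hx [] [] (by simp) (Or.inl rfl)
    simpa using this
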